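/- Let G be a connected {house, hole}-free graph and uv an edge of G. Then for every vertex z not in the line generated by u and v, there exists a common neighbour w of u and v such that w lies on a shortest path from z to u and on a shortest path from z to v. -/

import Mathlib

open SimpleGraph

variable {V : Type*}

/-- The interval between two vertices: vertices on some shortest path. -/
def interval (G : SimpleGraph V) (x y : V) : Set V :=
  {z | G.dist x y = G.dist x z + G.dist z y}

/-- The line generated by two vertices. -/
def line (G : SimpleGraph V) (x y : V) : Set V :=
  {z | z ∈ interval G x y ∨ x ∈ interval G z y ∨ y ∈ interval G x z}

/-- The house graph: a 5-cycle 0-1-2-3-4-0 plus the chord 1-4. -/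
def house : SimpleGraph (Fin 5) :=
  SimpleGraph.fromEdgeSet {s(0,1), s(1,2), s(2,3), s(3,4), s(4,0), s(1,4)}

/-- A graph is {house, hole}-free if it has no induced house and no induced
cycle of length at least 5. -/
def HHFree (G : SimpleGraph V) : Prop :=
  IsEmpty (house ↪g G) ∧ ∀ n, 5 ≤ n → IsEmpty (cycleGraph n ↪g G)

/-- A graph is hole-free if it has no induced cycle of length at least 5. -/
def HoleFree (G : SimpleGraph V) : Prop :=
  ∀ n, 5 ≤ n → IsEmpty (cycleGraph n ↪g G)

/-- A good pair: two vertices at distance 2 with a common neighbour `c`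
such that `line u c = line c v`. -/
def GoodPair (G : SimpleGraph V) (u v : V) : Prop :=
  G.dist u v = 2 ∧ ∃ c, G.Adj u c ∧ G.Adj c v ∧ line G u c = line G c v

/-- The set of all lines of a graph (generated by pairs of distinct vertices). -/
def lineSet (G : SimpleGraph V) : Set (Set V) :=
  {ℓ | ∃ u v : V, u ≠ v ∧ line G u v = ℓ}

/-! ### Auxiliary lemmas -/

private lemma dist_getVert_le {G : SimpleGraph V} (hG : G.Connected) {x y : V} (p : G.Walk x y) :
    ∀ i : ℕ, G.dist x (p.getVert i) ≤ i := by
  intro i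
  induction i with
  | zero => simp [Walk.getVert_zero]
  | succ i ih =>
    rcases Nat.lt_or_ge i p.length with h | h
    · have hadj := p.adj_getVert_succ h
      have h1 : G.dist (p.getVert i) (p.getVert (i+1)) = 1 := dist_eq_one_iff_adj.mpr hadj
      have h2 : G.dist x (p.getVert (i+1)) ≤
          G.dist x (p.getVert i) + G.dist (p.getVert i) (p.getVert (i+1)) := hG.dist_triangle
      omega
    · rw [p.getVert_of_length_le (by omega)]
      exact le_trans (dist_le p) (by omega)

private lemma getVert_dist_spec {G : SimpleGraph V} (hG : G.Connected) {x y : V} (p : G.Walk x y)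
    (hp : p.length = G.dist x y) {i : ℕ} (hi : i ≤ p.length) :
    G.dist x (p.getVert i) = i ∧ G.dist (p.getVert i) y = p.length - i := by
  have h1 := dist_getVert_le hG p i
  have h2 : G.dist (p.getVert i) y ≤ p.length - i := by
    have h := dist_getVert_le hG p.reverse (p.length - i)
    rw [Walk.getVert_reverse] at h
    rw [show p.length - (p.length - i) = i by omega] at h
    rw [dist_comm]
    exact h
  have h3 : G.dist x y ≤ G.dist x (p.getVert i) + G.dist (p.getVert i) y := hG.dist_triangle
  omega

private lemma no_house {G : SimpleGraph V} (hH : IsEmpty (house ↪g G)) (x0 x1 x2 x3 x4 : V)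
    (h01 : G.Adj x0 x1) (h12 : G.Adj x1 x2) (h23 : G.Adj x2 x3) (h34 : G.Adj x3 x4)
    (h40 : G.Adj x4 x0) (h14 : G.Adj x1 x4)
    (n02 : ¬ G.Adj x0 x2) (n03 : ¬ G.Adj x0 x3) (n13 : ¬ G.Adj x1 x3) (n24 : ¬ G.Adj x2 x4)
    (d02 : x0 ≠ x2) (d03 : x0 ≠ x3) (d13 : x1 ≠ x3) (d24 : x2 ≠ x4) : False := by
  have e01 := h01.ne; have e12 := h12.ne; have e23 := h23.ne; have e34 := h34.ne
  have e40 := h40.ne; have e14 := h14.ne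
  let f : Fin 5 → V := ![x0, x1, x2, x3, x4]
  have hinj : Function.Injective f := by
    intro i j hij
    fin_cases i <;> fin_cases j <;> simp_all [f]
  refine hH.false ⟨⟨f, hinj⟩, @fun i j => ?_⟩
  fin_cases i <;> fin_cases j <;>
    simp [f, house] <;>
    first
      | exact h01 | exact h12 | exact h23 | exact h34 | exact h40 | exact h14
      | exact h01.symm | exact h12.symm | exact h23.symm | exact h34.symm
      | exact h40.symm | exact h14.symm
      | exact n02 | exact n03 | exact n13 | exact n24
      | exact fun h => n02 h.symm | exact fun h => n03 h.symm
      | exact fun h => n13 h.symm | exact fun h => n24 h.symm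
      | exact G.loopless _

private lemma fin_sub_val_one {n : ℕ} (hn : 2 ≤ n) (x y : Fin n) :
    (x - y).val = 1 ↔ (x.val = y.val + 1 ∨ (x.val = 0 ∧ y.val + 1 = n)) := by
  have hx := x.isLt; have hy := y.isLt
  rw [Fin.sub_def]
  show (n - y.val + x.val) % n = 1 ↔ _
  rcases Nat.lt_or_ge (n - y.val + x.val) n with h | h
  · rw [Nat.mod_eq_of_lt h]; omega
  · have h2 : n - y.val + x.val - n < n := by omega
    rw [Nat.mod_eq_sub_mod h, Nat.mod_eq_of_lt h2]; omega

private lemma no_hole {G : SimpleGraph V} (hH : ∀ n, 5 ≤ n → IsEmpty (cycleGraph n ↪g G))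
    {n : ℕ} (hn : 5 ≤ n) (c : ℕ → V)
    (hinj : ∀ i j, i < j → j < n → c i ≠ c j)
    (hadj : ∀ i j, i < j → j < n → (G.Adj (c i) (c j) ↔ (j = i + 1 ∨ (i = 0 ∧ j = n - 1)))) :
    False := by
  have key : ∀ x y : Fin n, x.val < y.val →
      (G.Adj (c x.val) (c y.val) ↔ (cycleGraph n).Adj x y) := by
    intro x y hxy
    rw [cycleGraph_adj', fin_sub_val_one (by omega), fin_sub_val_one (by omega)]
    rw [hadj x.val y.val hxy y.isLt]
    have hx := x.isLt; have hy := y.isLt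
    omega
  refine (hH n hn).false ⟨⟨fun i => c i.val, ?_⟩, @fun x y => ?_⟩
  · intro x y hxy
    rcases Nat.lt_trichotomy x.val y.val with h | h | h
    · exact absurd hxy (hinj x.val y.val h y.isLt)
    · exact Fin.ext h
    · exact absurd hxy.symm (hinj y.val x.val h x.isLt)
  · rcases Nat.lt_trichotomy x.val y.val with h | h | h
    · exact key x y h
    · have hxy : x = y := Fin.ext h
      subst hxy
      simp [SimpleGraph.irrefl]
    · rw [G.adj_comm, (cycleGraph n).adj_comm]
      exact key y x h

/-- The triangle condition in connected {house,hole}-free graphs. -/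
private lemma triangle_condition {G : SimpleGraph V} (hG : G.Connected) (hH : HHFree G) :
    ∀ (k : ℕ) (z u v : V), G.Adj u v → G.dist z u = k → G.dist z v = k →
      ∃ w, G.Adj u w ∧ G.Adj v w ∧ G.dist z w + 1 = k := by
  intro k
  induction k using Nat.strong_induction_on with
  | _ k IH =>
  intro z u v huv hu hv
  obtain hk0 | hk1 | hk2 : k = 0 ∨ k = 1 ∨ 2 ≤ k := by omega
  · subst hk0
    have h1 : z = u := hG.dist_eq_zero_iff.mp hu
    have h2 : z = v := hG.dist_eq_zero_iff.mp hv
    rw [← h1] at huv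
    rw [← h2] at huv
    exact absurd huv (G.loopless.irrefl z)
  · subst hk1
    have h1 : G.Adj z u := dist_eq_one_iff_adj.mp hu
    have h2 : G.Adj z v := dist_eq_one_iff_adj.mp hv
    exact ⟨z, h1.symm, h2.symm, by rw [SimpleGraph.dist_self]⟩
  by_cases hgate : ∃ p, p ≠ z ∧ G.dist z p + G.dist p u = k ∧ G.dist z p + G.dist p v = k
  · obtain ⟨p, hpz, h1, h2⟩ := hgate
    have ht : 1 ≤ G.dist z p := hG.pos_dist_of_ne (Ne.symm hpz)
    have htu : 1 ≤ G.dist p u := by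
      rcases Nat.eq_zero_or_pos (G.dist p u) with h | h
      · exfalso
        have hp : p = u := hG.dist_eq_zero_iff.mp h
        subst hp
        have huv1 : G.dist p v = 1 := dist_eq_one_iff_adj.mpr huv
        omega
      · exact h
    have hkv : G.dist p v = G.dist p u := by omega
    obtain ⟨w, hw1, hw2, hw3⟩ := IH (G.dist p u) (by omega) p u v huv rfl hkv
    refine ⟨w, hw1, hw2, ?_⟩
    have hle : G.dist z w ≤ G.dist z p + G.dist p w := hG.dist_triangle
    have hge : G.dist z u ≤ G.dist z w + G.dist w u := hG.dist_triangle
    have hwu : G.dist w u = 1 := dist_eq_one_iff_adj.mpr hw1.symm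
    omega
  · have gate : ∀ p : V, G.dist z p + G.dist p u = k → G.dist z p + G.dist p v = k → p = z := by
      intro p h1 h2
      by_contra hne
      exact hgate ⟨p, hne, h1, h2⟩
    obtain ⟨pa, hpa⟩ := hG.exists_walk_length_eq_dist z u
    obtain ⟨pb, hpb⟩ := hG.exists_walk_length_eq_dist z v
    set a := pa.getVert with ha
    set b := pb.getVert with hb
    have hpak : pa.length = k := by rw [hpa, hu]
    have hpbk : pb.length = k := by rw [hpb, hv]
    have levA : ∀ i, i ≤ k → G.dist z (a i) = i := fun i hi =>
      (getVert_dist_spec hG pa hpa (by omega)).1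
    have levB : ∀ i, i ≤ k → G.dist z (b i) = i := fun i hi =>
      (getVert_dist_spec hG pb hpb (by omega)).1
    have distA : ∀ i, i ≤ k → G.dist (a i) u = k - i := by
      intro i hi
      have h2 : G.dist (a i) u = pa.length - i := (getVert_dist_spec hG pa hpa (by omega)).2
      omega
    have distB : ∀ i, i ≤ k → G.dist (b i) v = k - i := by
      intro i hi
      have h2 : G.dist (b i) v = pb.length - i := (getVert_dist_spec hG pb hpb (by omega)).2
      omega
    have adjA : ∀ i, i < k → G.Adj (a i) (a (i+1)) := fun i hi =>
      pa.adj_getVert_succ (by omega)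
    have adjB : ∀ i, i < k → G.Adj (b i) (b (i+1)) := fun i hi =>
      pb.adj_getVert_succ (by omega)
    have a0 : a 0 = z := pa.getVert_zero
    have b0 : b 0 = z := pb.getVert_zero
    have ak : a k = u := by rw [ha, ← hpak]; exact pa.getVert_length
    have bk : b k = v := by rw [hb, ← hpbk]; exact pb.getVert_length
    have adjLev : ∀ x y : V, G.Adj x y → G.dist z x ≤ G.dist z y + 1 := by
      intro x y h
      have h1 : G.dist y x = 1 := dist_eq_one_iff_adj.mpr h.symm
      have h2 : G.dist z x ≤ G.dist z y + G.dist y x := hG.dist_triangle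
      omega
    have crossLev : ∀ s t, s ≤ k → t ≤ k → G.Adj (a s) (b t) → (s ≤ t + 1 ∧ t ≤ s + 1) := by
      intro s t hs ht h
      have h1 := adjLev (a s) (b t) h
      have h2 := adjLev (b t) (a s) h.symm
      rw [levA s hs, levB t ht] at h1 h2
      omega
    have gate1 : ∀ s, s + 1 ≤ k → G.Adj (a s) (b (s+1)) → s = 0 := by
      intro s hs h
      have hdav : G.dist (a s) v = k - s := by
        have h1 : G.dist (a s) v ≤ G.dist (a s) (b (s+1)) + G.dist (b (s+1)) v :=
          hG.dist_triangle
        have h2 : G.dist (a s) (b (s+1)) = 1 := dist_eq_one_iff_adj.mpr h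
        have h3 := distB (s+1) hs
        have h4 : G.dist z v ≤ G.dist z (a s) + G.dist (a s) v := hG.dist_triangle
        rw [levA s (by omega)] at h4
        omega
      have haz : a s = z := gate (a s) (by rw [levA s (by omega), distA s (by omega)]; omega)
        (by rw [levA s (by omega), hdav]; omega)
      have h5 := levA s (by omega)
      rw [haz, SimpleGraph.dist_self] at h5
      omega
    have gate2 : ∀ s, s + 1 ≤ k → G.Adj (b s) (a (s+1)) → s = 0 := by
      intro s hs h
      have hdbu : G.dist (b s) u = k - s := by
        have h1 : G.dist (b s) u ≤ G.dist (b s) (a (s+1)) + G.dist (a (s+1)) u :=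
          hG.dist_triangle
        have h2 : G.dist (b s) (a (s+1)) = 1 := dist_eq_one_iff_adj.mpr h
        have h3 := distA (s+1) hs
        have h4 : G.dist z u ≤ G.dist z (b s) + G.dist (b s) u := hG.dist_triangle
        rw [levB s (by omega)] at h4
        omega
      have hbz : b s = z := gate (b s) (by rw [levB s (by omega), hdbu]; omega)
        (by rw [levB s (by omega), distB s (by omega)]; omega)
      have h5 := levB s (by omega)
      rw [hbz, SimpleGraph.dist_self] at h5
      omega
    have gateEq : ∀ s, s ≤ k → a s = b s → s = 0 := by
      intro s hs h
      have haz : a s = z := gate (a s) (by rw [levA s hs, distA s hs]; omega)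
        (by rw [levA s hs, h, distB s hs]; omega)
      have h5 := levA s hs
      rw [haz, SimpleGraph.dist_self] at h5
      omega
    have injA : ∀ s t, s ≤ k → t ≤ k → a s = a t → s = t := by
      intro s t hs ht h
      have h1 := levA s hs
      have h2 := levA t ht
      rw [h] at h1
      omega
    have injB : ∀ s t, s ≤ k → t ≤ k → b s = b t → s = t := by
      intro s t hs ht h
      have h1 := levB s hs
      have h2 := levB t ht
      rw [h] at h1
      omega
    have crossEq : ∀ s t, s ≤ k → t ≤ k → a s = b t → (s = 0 ∧ t = 0) := by
      intro s t hs ht h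
      have h1 := levA s hs
      have h2 := levB t ht
      rw [h] at h1
      have hst : s = t := by omega
      subst hst
      have := gateEq s hs h
      omega
    have adjA_iff : ∀ s t, s ≤ k → t ≤ k → (G.Adj (a s) (a t) ↔ (t = s+1 ∨ s = t+1)) := by
      intro s t hs ht
      constructor
      · intro h
        have h1 := adjLev (a s) (a t) h
        have h2 := adjLev (a t) (a s) h.symm
        rw [levA s hs, levA t ht] at h1 h2
        have hne : s ≠ t := by
          intro he
          subst he
          exact G.loopless.irrefl _ h
        omega
      · rintro (rfl | rfl)
        · exact adjA s (by omega)
        · exact (adjA t (by omega)).symm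
    have adjB_iff : ∀ s t, s ≤ k → t ≤ k → (G.Adj (b s) (b t) ↔ (t = s+1 ∨ s = t+1)) := by
      intro s t hs ht
      constructor
      · intro h
        have h1 := adjLev (b s) (b t) h
        have h2 := adjLev (b t) (b s) h.symm
        rw [levB s hs, levB t ht] at h1 h2
        have hne : s ≠ t := by
          intro he
          subst he
          exact G.loopless.irrefl _ h
        omega
      · rintro (rfl | rfl)
        · exact adjB s (by omega)
        · exact (adjB t (by omega)).symm
    have hu'adj : G.Adj (a (k-1)) u := by
      have h := adjA (k-1) (by omega)
      rwa [show k-1+1 = k by omega, ak] at h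
    have hv'adj : G.Adj (b (k-1)) v := by
      have h := adjB (k-1) (by omega)
      rwa [show k-1+1 = k by omega, bk] at h
    by_cases hAu' : G.Adj v (a (k-1))
    · exact ⟨a (k-1), hu'adj.symm, hAu', by rw [levA (k-1) (by omega)]; omega⟩
    by_cases hBv' : G.Adj u (b (k-1))
    · exact ⟨b (k-1), hBv', hv'adj.symm, by rw [levB (k-1) (by omega)]; omega⟩
    exfalso
    classical
    by_cases hex : ∃ i, 1 ≤ i ∧ i ≤ k - 1 ∧ G.Adj (a i) (b i)
    · -- there is a horizontal chord
      obtain ⟨i1, hi11, hi12, hi13⟩ := hex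
      have hPi1 : (fun i => 1 ≤ i ∧ G.Adj (a i) (b i)) i1 := ⟨hi11, hi13⟩
      have hspec := Nat.findGreatest_spec (P := fun i => 1 ≤ i ∧ G.Adj (a i) (b i)) (m := i1) (by omega : i1 ≤ k - 1) hPi1
      set i0 := Nat.findGreatest (fun i => 1 ≤ i ∧ G.Adj (a i) (b i)) (k-1) with hi0def
      have hi0le : i0 ≤ k - 1 := hi0def ▸ Nat.findGreatest_le _
      obtain ⟨hi01, hchord⟩ := hspec
      have hmax : ∀ i, i0 < i → i ≤ k-1 → ¬ G.Adj (a i) (b i) := by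
        intro i h1 h2 h
        rw [hi0def] at h1
        exact (Nat.findGreatest_is_greatest h1 h2) ⟨by omega, h⟩
      by_cases hi0top : i0 = k - 1
      · -- an induced house
        rw [hi0top] at hchord
        obtain ⟨w', hw1, hw2, hw3⟩ := IH (k-1) (by omega) z (a (k-1)) (b (k-1)) hchord
          (levA _ (by omega)) (levB _ (by omega))
        have hw3' : G.dist z w' = k - 2 := by omega
        apply no_house hH.1 w' (a (k-1)) u v (b (k-1)) hw1.symm hu'adj huv hv'adj.symm hw2
          hchord
        · intro h
          have := adjLev u w' h.symm
          rw [hu, hw3'] at this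
          omega
        · intro h
          have := adjLev v w' h.symm
          rw [hv, hw3'] at this
          omega
        · exact fun h => hAu' h.symm
        · exact hBv'
        · intro h
          rw [← h, hw3'] at hu
          omega
        · intro h
          rw [← h, hw3'] at hv
          omega
        · intro h
          have hl := levA (k-1) (by omega)
          rw [h, hv] at hl
          omega
        · intro h
          have hl := levB (k-1) (by omega)
          rw [← h, hu] at hl
          omega
      · -- an induced hole of even length 2m+2
        have hi0lt : i0 ≤ k - 2 := by omega
        set m := k - i0 with hm
        have hm2 : 2 ≤ m := by omega
        set c : ℕ → V := fun j => if j ≤ m then a (i0 + j) else b (i0 + (2*m + 1 - j)) with hc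
        have hcA : ∀ j, j ≤ m → c j = a (i0 + j) := by
          intro j hj
          simp only [hc]
          rw [if_pos hj]
        have hcB : ∀ j, m < j → c j = b (i0 + (2*m + 1 - j)) := by
          intro j hj
          simp only [hc]
          rw [if_neg (by omega)]
        apply no_hole hH.2 (n := 2*m + 2) (by omega) c
        · -- injectivity
          intro i j hij hj hcontra
          rcases le_or_gt i m with hi' | hi' <;> rcases le_or_gt j m with hj' | hj'
          · rw [hcA i hi', hcA j hj'] at hcontra
            have := injA (i0+i) (i0+j) (by omega) (by omega) hcontra
            omega
          · rw [hcA i hi', hcB j hj'] at hcontra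
            have := crossEq (i0+i) (i0 + (2*m+1-j)) (by omega) (by omega) hcontra
            omega
          · omega
          · rw [hcB i hi', hcB j hj'] at hcontra
            have := injB (i0 + (2*m+1-i)) (i0 + (2*m+1-j)) (by omega) (by omega) hcontra
            omega
        · -- adjacency structure
          intro i j hij hj
          rcases le_or_gt i m with hi' | hi' <;> rcases le_or_gt j m with hj' | hj'
          · rw [hcA i hi', hcA j hj', adjA_iff (i0+i) (i0+j) (by omega) (by omega)]
            omega
          · rw [hcA i hi', hcB j hj']
            have htk : i0 + (2*m+1-j) ≤ k := by omega
            have hsk : i0 + i ≤ k := by omega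
            constructor
            · intro h
              have hcl := crossLev (i0+i) (i0 + (2*m+1-j)) (by omega) (by omega) h
              rcases Nat.lt_trichotomy (i0 + (2*m+1-j)) (i0+i) with hlt | heq | hgt
              · exfalso
                have hg := gate2 (i0 + (2*m+1-j)) (by omega)
                  (by rw [show i0 + (2*m+1-j) + 1 = i0 + i by omega]; exact h.symm)
                omega
              · by_cases hik : i0 + i = k
                · left; omega
                · by_cases hi00 : i = 0
                  · right
                    constructor
                    · exact hi00
                    · omega
                  · exfalso
                    apply hmax (i0+i) (by omega) (by omega)
                    rw [heq] at h
                    exact h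
              · exfalso
                have hg := gate1 (i0+i) (by omega)
                  (by rw [show i0+i+1 = i0 + (2*m+1-j) by omega]; exact h)
                omega
            · rintro (h | ⟨h1, h2⟩)
              · rw [show i0 + i = k by omega, show i0 + (2*m+1-j) = k by omega, ak, bk]
                exact huv
              · rw [show i0 + i = i0 by omega, show i0 + (2*m+1-j) = i0 by omega]
                exact hchord
          · omega
          · rw [hcB i hi', hcB j hj',
              adjB_iff (i0 + (2*m+1-i)) (i0 + (2*m+1-j)) (by omega) (by omega)]
            omega
    · -- no horizontal chord: an induced hole of odd length 2k+1
      have hno : ∀ i, 1 ≤ i → i ≤ k-1 → ¬ G.Adj (a i) (b i) := by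
        intro i h1 h2 h
        exact hex ⟨i, h1, h2, h⟩
      set c : ℕ → V := fun j => if j ≤ k then a j else b (2*k + 1 - j) with hc
      have hcA : ∀ j, j ≤ k → c j = a j := by
        intro j hj
        simp only [hc]
        rw [if_pos hj]
      have hcB : ∀ j, k < j → c j = b (2*k + 1 - j) := by
        intro j hj
        simp only [hc]
        rw [if_neg (by omega)]
      apply no_hole hH.2 (n := 2*k + 1) (by omega) c
      · -- injectivity
        intro i j hij hj hcontra
        rcases le_or_gt i k with hi' | hi' <;> rcases le_or_gt j k with hj' | hj'
        · rw [hcA i hi', hcA j hj'] at hcontra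
          have := injA i j (by omega) (by omega) hcontra
          omega
        · rw [hcA i hi', hcB j hj'] at hcontra
          have := crossEq i (2*k+1-j) (by omega) (by omega) hcontra
          omega
        · omega
        · rw [hcB i hi', hcB j hj'] at hcontra
          have := injB (2*k+1-i) (2*k+1-j) (by omega) (by omega) hcontra
          omega
      · -- adjacency structure
        intro i j hij hj
        rcases le_or_gt i k with hi' | hi' <;> rcases le_or_gt j k with hj' | hj'
        · rw [hcA i hi', hcA j hj', adjA_iff i j (by omega) (by omega)]
          omega
        · rw [hcA i hi', hcB j hj']
          have htk : 2*k+1-j ≤ k := by omega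
          have htk1 : 1 ≤ 2*k+1-j := by omega
          constructor
          · intro h
            have hcl := crossLev i (2*k+1-j) (by omega) (by omega) h
            rcases Nat.lt_trichotomy (2*k+1-j) i with hlt | heq | hgt
            · exfalso
              have hg := gate2 (2*k+1-j) (by omega)
                (by rw [show 2*k+1-j + 1 = i by omega]; exact h.symm)
              omega
            · by_cases hik : i = k
              · left; omega
              · exfalso
                apply hno i (by omega) (by omega)
                rw [heq] at h
                exact h
            · have hg := gate1 i (by omega)
                (by rw [show i+1 = 2*k+1-j by omega]; exact h)
              right
              constructor
              · exact hg
              · omega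
          · rintro (h | ⟨h1, h2⟩)
            · rw [show i = k by omega, show 2*k+1-j = k by omega, ak, bk]
              exact huv
            · rw [show 2*k+1-j = 1 by omega, h1, a0, ← b0]
              exact adjB 0 (by omega)
        · omega
        · rw [hcB i hi', hcB j hj',
            adjB_iff (2*k+1-i) (2*k+1-j) (by omega) (by omega)]
          omega

theorem stmt5 (G : SimpleGraph V) (hG : G.Connected) (hH : HHFree G)
    (u v z : V) (huv : G.Adj u v) (hz : z ∉ line G u v) :
    ∃ w : V, G.Adj u w ∧ G.Adj v w ∧ w ∈ interval G z u ∧ w ∈ interval G z v := by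
  have huv1 : G.dist u v = 1 := dist_eq_one_iff_adj.mpr huv
  have e1 : ¬ (G.dist z v = G.dist z u + G.dist u v) := fun h => hz (Or.inr (Or.inl h))
  have e2 : ¬ (G.dist u z = G.dist u v + G.dist v z) := fun h => hz (Or.inr (Or.inr h))
  have t1 : G.dist z v ≤ G.dist z u + G.dist u v := hG.dist_triangle
  have t2 : G.dist z u ≤ G.dist z v + G.dist v u := hG.dist_triangle
  have c1 : G.dist u z = G.dist z u := dist_comm
  have c2 : G.dist v z = G.dist z v := dist_comm
  have c3 : G.dist v u = G.dist u v := dist_comm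
  have heq : G.dist z v = G.dist z u := by omega
  obtain ⟨w, hw1, hw2, hw3⟩ :=
    triangle_condition hG hH (G.dist z u) z u v huv rfl heq
  refine ⟨w, hw1, hw2, ?_, ?_⟩
  · show G.dist z u = G.dist z w + G.dist w u
    have hwu : G.dist w u = 1 := dist_eq_one_iff_adj.mpr hw1.symm
    omega
  · show G.dist z v = G.dist z w + G.dist w v
    have hwv : G.dist w v = 1 := dist_eq_one_iff_adj.mpr hw2.symm
    omega
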